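/- Let T_U, T_I, V : ℝ → ℝ be differentiable, η : ℝ → ℝ, and constants λ, ρ, δ, N, c satisfy the HIV ODE system: T_U' = λ - ρT_U - η T_U V, T_I' = η T_U V - δ T_I, V' = Nδ T_I - cV. Fix τ ∈ ℝ with ρ ≠ 0, (ρ-δ)e^{ρτ} + δ ≠ 0, and assume V(t) ≠ 0, and V(t)[T_I(t)δ + T_U(t)ρ]e^{ρτ} - V(t)T_I(t)δ ≠ 0 for all t. Define the transformed quantities: T̃_U(t) = T_U(t) + T_I(t) - (T_I(t)/ρ)(δe^{-ρτ}+ρ-δ), T̃_I(t) = (T_I(t)/ρ)(δe^{-ρτ}+ρ-δ), Ṽ(t) = V(t), λ̃ = λ, ρ̃ = ρ, δ̃ = δρ/((ρ-δ)e^{ρτ}+δ), Ñ = Ne^{ρτ}, c̃ = c, and η̃(t) = [η(t)T_U(t)V(t)ρe^{ρτ} + (T_I(t)δ² - T_I(t)δρ - η(t)T_U(t)V(t)δ)(e^{ρτ}-1)] / [V(t)(T_I(t)δ + T_U(t)ρ)e^{ρτ} - V(t)T_I(t)δ]. Then the transformed quantities satisfy the same HIV ODE system: dT̃_U/dt = λ̃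 - ρ̃T̃_U - η̃T̃_UṼ, dT̃_I/dt = η̃T̃_UṼ - δ̃T̃_I, dṼ/dt = Ñδ̃T̃_I - c̃Ṽ. -/

import Mathlib

open Real in
theorem stmt_3 (T_U T_I V η : ℝ → ℝ) (lam ρ δ N c : ℝ)
    (hTU : ∀ t, HasDerivAt T_U (lam - ρ * T_U t - η t * T_U t * V t) t)
    (hTI : ∀ t, HasDerivAt T_I (η t * T_U t * V t - δ * T_I t) t)
    (hV : ∀ t, HasDerivAt V (N * δ * T_I t - c * V t) t)
    (τ : ℝ) (hρ : ρ ≠ 0) (hden : (ρ - δ) * exp (ρ * τ) + δ ≠ 0)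
    (hVne : ∀ t, V t ≠ 0)
    (hden2 : ∀ t, V t * (T_I t * δ + T_U t * ρ) * exp (ρ * τ) - V t * T_I t * δ ≠ 0)
    (T_U' T_I' V' η' : ℝ → ℝ) (lam' ρ' δ' N' c' : ℝ)
    (hTU' : ∀ t, T_U' t = T_U t + T_I t - (T_I t / ρ) * (δ * exp (-ρ * τ) + ρ - δ))
    (hTI' : ∀ t, T_I' t = (T_I t / ρ) * (δ * exp (-ρ * τ) + ρ - δ))
    (hV' : ∀ t, V' t = V t)
    (hlam' : lam' = lam) (hρ' : ρ' = ρ)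
    (hδ' : δ' = δ * ρ / ((ρ - δ) * exp (ρ * τ) + δ))
    (hN' : N' = N * exp (ρ * τ)) (hc' : c' = c)
    (hη' : ∀ t, η' t =
      (η t * T_U t * V t * ρ * exp (ρ * τ) +
        (T_I t * δ ^ 2 - T_I t * δ * ρ - η t * T_U t * V t * δ) * (exp (ρ * τ) - 1)) /
      (V t * (T_I t * δ + T_U t * ρ) * exp (ρ * τ) - V t * T_I t * δ)) :
    (∀ t, HasDerivAt T_U' (lam' - ρ' * T_U' t - η' t * T_U' t * V' t) t) ∧
    (∀ t, HasDerivAt T_I' (η' t * T_U' t * V' t - δ' * T_I' t) t) ∧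
    (∀ t, HasDerivAt V' (N' * δ' * T_I' t - c' * V' t) t) := by
  have hE : exp (ρ * τ) ≠ 0 := exp_ne_zero _
  have hneg : exp (-ρ * τ) = (exp (ρ * τ))⁻¹ := by
    rw [← exp_neg]; ring_nf
  have hfU : T_U' = fun t => T_U t + T_I t - (T_I t / ρ) * (δ * exp (-ρ * τ) + ρ - δ) :=
    funext hTU'
  have hfI : T_I' = fun t => (T_I t / ρ) * (δ * exp (-ρ * τ) + ρ - δ) := funext hTI'
  have hfV : V' = V := funext hV'
  refine ⟨fun t => ?_, fun t => ?_, fun t => ?_⟩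
  · rw [hfU]
    have h := (((hTU t).add (hTI t)).sub
      (((hTI t).div_const ρ).mul_const (δ * exp (-ρ * τ) + ρ - δ)))
    refine h.congr_deriv ?_
    have hD := hden2 t
    have hVt := hVne t
    simp only [hlam', hρ', hη', hTU', hV', hneg]
    have hD1 : rexp (ρ * τ) * (δ * T_I t + ρ * T_U t) - δ * T_I t ≠ 0 := by
      intro h0; apply hD; linear_combination V t * h0
    have hD2 : rexp (ρ * τ) * (δ * T_I t + T_U t * ρ) - δ * T_I t ≠ 0 := by
      intro h0; apply hD; linear_combination V t * h0
    have hd1 : rexp (ρ * τ) * (ρ - δ) + δ ≠ 0 := by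
      intro h0; apply hden; linarith
    field_simp [hD, hD1, hD2, hd1]
    ring
  · rw [hfI]
    have h := ((hTI t).div_const ρ).mul_const (δ * exp (-ρ * τ) + ρ - δ)
    refine h.congr_deriv ?_
    have hD := hden2 t
    have hVt := hVne t
    simp only [hη', hδ', hTU', hTI', hV', hneg]
    have hD1 : rexp (ρ * τ) * (δ * T_I t + ρ * T_U t) - δ * T_I t ≠ 0 := by
      intro h0; apply hD; linear_combination V t * h0
    have hD2 : rexp (ρ * τ) * (δ * T_I t + T_U t * ρ) - δ * T_I t ≠ 0 := by
      intro h0; apply hD; linear_combination V t * h0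
    have hd1 : rexp (ρ * τ) * (ρ - δ) + δ ≠ 0 := by
      intro h0; apply hden; linarith
    field_simp [hD, hD1, hD2, hd1]
    ring
  · rw [hfV]
    convert hV t using 1
    simp only [hN', hδ', hc', hTI', hV', hneg]
    field_simp
    congr 1
    rw [div_eq_iff (by intro h0; apply hden; linarith)]
    ring
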